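/- Let D be a positive integer, n a natural number, and for each dimension k = 1,…,D let p_{k,0},…,p_{k,n} be n+1 pairwise distinct real numbers. Then the sample matrix M_D of the triangular lattice {(p_{1,k_1},…,p_{D,k_D}) : k_i ≥ 0, ∑_i k_i ≤ n} with respect to the D-variate monomials of total degree at most n is nonsingular, i.e., det M_D ≠ 0 (the triangular lattice is poised). -/
import Mathlib

open Polynomial Finset

/-- Index set of a triangular lattice of degree `n` in `D` dimensions:
multiindices `k ∈ {0,…,n}^D` with `∑ i, k i ≤ n`. -/
abbrev TriIdxD (n D : ℕ) := {k : Fin D → Fin (n + 1) // ∑ i, (k i : ℕ) ≤ n}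

/-- The sample matrix of the triangular lattice
`{(p_{1,k_1},…,p_{D,k_D}) : ∑ k_i ≤ n}` with respect to the `D`-variate
monomials of total degree at most `n`. -/
def sampleMatrixD (n D : ℕ) (p : Fin D → Fin (n + 1) → ℝ) :
    Matrix (TriIdxD n D) (TriIdxD n D) ℝ :=
  Matrix.of fun k e => ∏ i, p i (k.val i) ^ ((e.val i : ℕ))

/-- A permutation of a finite partial order satisfying `x ≤ σ x` is the identity. -/
lemma perm_eq_one_of_le {α : Type*} [PartialOrder α] [Finite α] (σ : Equiv.Perm α)
    (h : ∀ x, x ≤ σ x) : σ = 1 := by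
  have key : ∀ (j : ℕ) (x : α), x ≤ (σ ^ j) x := by
    intro j
    induction j with
    | zero => simp
    | succ j ih =>
      intro x
      calc x ≤ σ x := h x
        _ ≤ (σ ^ j) (σ x) := ih (σ x)
        _ = (σ ^ (j + 1)) x := by rw [pow_succ]; rfl
  have hσfin : 0 < orderOf σ := orderOf_pos σ
  ext x
  have h1 : (σ ^ (orderOf σ - 1)) (σ x) = x := by
    have : (σ ^ (orderOf σ - 1)) (σ x) = (σ ^ (orderOf σ - 1) * σ) x := rfl
    rw [this, ← pow_succ, Nat.sub_add_cancel hσfin, pow_orderOf_eq_one]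
    rfl
  have h2 : σ x ≤ x := by
    have := key (orderOf σ - 1) (σ x)
    rwa [h1] at this
  simpa using le_antisymm h2 (h x)

theorem sampleMatrixD_det_ne_zero (n D : ℕ) (hD : 1 ≤ D)
    (p : Fin D → Fin (n + 1) → ℝ) (hp : ∀ i, Function.Injective (p i)) :
    (sampleMatrixD n D p).det ≠ 0 := by
  classical
  -- extension of the node values to all of ℕ
  set a : Fin D → ℕ → ℝ := fun i m => if h : m < n + 1 then p i ⟨m, h⟩ else 0 with ha
  -- Newton polynomials
  set q : Fin D → ℕ → Polynomial ℝ := fun i l => ∏ m ∈ Finset.range l, (X - C (a i m)) with hq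
  have hq_monic : ∀ i l, (q i l).Monic := fun i l =>
    monic_prod_of_monic _ _ fun m _ => monic_X_sub_C _
  have hq_deg : ∀ i l, (q i l).natDegree = l := by
    intro i l
    rw [hq]
    simp [Polynomial.natDegree_prod_of_monic (h := fun m _ => monic_X_sub_C (a i m)),
      natDegree_X_sub_C]
  -- the Newton sample matrix
  set A : Matrix (TriIdxD n D) (TriIdxD n D) ℝ := fun k e =>
    ∏ i, ∏ m ∈ Finset.range (e.val i : ℕ), (p i (k.val i) - a i m) with hA
  -- the transition matrix
  set Cm : Matrix (TriIdxD n D) (TriIdxD n D) ℝ := fun f e =>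
    ∏ i, (q i (e.val i : ℕ)).coeff (f.val i : ℕ) with hCm
  -- A = M * Cm
  have hfact : A = sampleMatrixD n D p * Cm := by
    ext k e
    rw [Matrix.mul_apply]
    have heval : ∀ i : Fin D,
        (∏ m ∈ Finset.range (e.val i : ℕ), (p i (k.val i) - a i m)) =
        ∑ j : Fin (n + 1), (q i (e.val i : ℕ)).coeff (j : ℕ) * p i (k.val i) ^ (j : ℕ) := by
      intro i
      have hdeg : (q i (e.val i : ℕ)).natDegree < n + 1 := by
        rw [hq_deg]; exact (e.val i).isLt
      have := Polynomial.eval_eq_sum_range' hdeg (p i (k.val i))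
      rw [Fin.sum_univ_eq_sum_range (fun j => (q i (e.val i : ℕ)).coeff j * p i (k.val i) ^ j),
        ← this, hq]
      simp [eval_prod]
    have hA' : A k e = ∑ g : Fin D → Fin (n + 1),
        ∏ i, (q i (e.val i : ℕ)).coeff ((g i : ℕ)) * p i (k.val i) ^ ((g i : ℕ)) := by
      rw [hA]
      simp only [heval]
      exact Fintype.prod_sum _
    rw [hA']
    -- restrict the sum to the triangular index set
    have hzero : ∀ g : Fin D → Fin (n + 1), ¬ (∑ i, (g i : ℕ) ≤ n) →
        (∏ i, (q i (e.val i : ℕ)).coeff ((g i : ℕ)) * p i (k.val i) ^ ((g i : ℕ))) = 0 := by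
      intro g hg
      have : ∃ i, (e.val i : ℕ) < (g i : ℕ) := by
        by_contra hc
        push_neg at hc
        exact hg (le_trans (Finset.sum_le_sum fun i _ => hc i) e.property)
      obtain ⟨i, hi⟩ := this
      apply Finset.prod_eq_zero (Finset.mem_univ i)
      rw [Polynomial.coeff_eq_zero_of_natDegree_lt (by rw [hq_deg]; exact hi)]
      ring
    rw [← Finset.sum_filter_of_ne (p := fun g : Fin D → Fin (n+1) => ∑ i, (g i : ℕ) ≤ n)
      (fun g _ hgne => by by_contra hc; exact hgne (hzero g hc))]
    rw [Finset.sum_subtype (p := fun g : Fin D → Fin (n+1) => ∑ i, (g i : ℕ) ≤ n)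
      (Finset.univ.filter (fun g : Fin D → Fin (n+1) => ∑ i, (g i : ℕ) ≤ n))
      (fun g => by simp)
      (fun g => ∏ i, (q i (e.val i : ℕ)).coeff ((g i : ℕ)) * p i (k.val i) ^ ((g i : ℕ)))]
    apply Finset.sum_congr rfl
    intro f _
    rw [sampleMatrixD, hCm]
    simp [Finset.prod_mul_distrib, mul_comm]
  -- triangularity of A
  have htri : ∀ k e : TriIdxD n D, ¬ (e ≤ k) → A k e = 0 := by
    intro k e hke
    have : ∃ i, (k.val i : ℕ) < (e.val i : ℕ) := by
      by_contra hc
      push_neg at hc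
      exact hke fun i => by exact_mod_cast hc i
    obtain ⟨i, hi⟩ := this
    rw [hA]
    apply Finset.prod_eq_zero (Finset.mem_univ i)
    apply Finset.prod_eq_zero (Finset.mem_range.mpr hi)
    have hlt : (k.val i : ℕ) < n + 1 := (k.val i).isLt
    rw [ha]
    simp [hlt]
  -- diagonal entries of A are nonzero
  have hdiag : ∀ k : TriIdxD n D, A k k ≠ 0 := by
    intro k
    rw [hA]
    apply Finset.prod_ne_zero_iff.mpr
    intro i _
    apply Finset.prod_ne_zero_iff.mpr
    intro m hm
    rw [Finset.mem_range] at hm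
    have hlt : m < n + 1 := lt_trans hm (k.val i).isLt
    rw [ha]
    simp only [hlt, dif_pos]
    refine sub_ne_zero.mpr fun hcontra => ?_
    have h2 := congrArg Fin.val (hp i hcontra)
    simp at h2
    omega
  -- det A = product of diagonal entries
  have hdetA : A.det = ∏ k : TriIdxD n D, A k k := by
    rw [Matrix.det_apply]
    rw [Finset.sum_eq_single_of_mem 1 (Finset.mem_univ 1)]
    · simp
    · intro σ _ hσ
      have : ∃ x, ¬ (x ≤ σ x) := by
        by_contra hc
        push_neg at hc
        exact hσ (perm_eq_one_of_le σ hc)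
      obtain ⟨x, hx⟩ := this
      have hz : (∏ i, A (σ i) i) = 0 := Finset.prod_eq_zero (Finset.mem_univ x) (htri (σ x) x hx)
      rw [hz]
      simp
  have hAne : A.det ≠ 0 := by
    rw [hdetA]
    exact Finset.prod_ne_zero_iff.mpr fun k _ => hdiag k
  intro hM
  apply hAne
  rw [hfact, Matrix.det_mul, hM, zero_mul]
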